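/- arXiv:1502.02926 — 7 statements merged into one kernel-verified Lean document; each statement's English description precedes it below -/
import Mathlib

section
/- Let α > 0 and β < 0, and set γ = √(β² + 2α). Define D(t) = γ(e^{γt} + 1) − β(e^{γt} − 1) and Ψ(t) = −2(e^{γt} − 1)/D(t) for t ≥ 0. Then D(t) > 0 for all t ≥ 0 (so Ψ is well defined), Ψ(0) = 0, and for every t ≥ 0 one has Ψ'(t) = (α/2)·Ψ(t)² + βΨ(t) − 1. In other words, Ψ is the solution of the Riccati equation of the Cox–Ingersoll–Ross model with functional characteristic R(u) = (α/2)u² + βu and λ = 1 (and Φ ≡ 0 solves Φ' = F∘Ψ since F ≡ 0). -/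
/-- The Riccati solution of the Cox–Ingersoll–Ross model.
Let α > 0, β < 0, γ = √(β² + 2α), D(t) = γ(e^{γt} + 1) − β(e^{γt} − 1),
Ψ(t) = −2(e^{γt} − 1)/D(t). Then D(t) > 0 for all t ≥ 0, Ψ(0) = 0, and
Ψ'(t) = (α/2)Ψ(t)² + βΨ(t) − 1 for all t ≥ 0. -/
theorem stmt_1 (α β : ℝ) (hα : 0 < α) (hβ : β < 0)
    (γ : ℝ) (hγ : γ = Real.sqrt (β ^ 2 + 2 * α))
    (D Ψ : ℝ → ℝ)
    (hD : ∀ t, D t = γ * (Real.exp (γ * t) + 1) - β * (Real.exp (γ * t) - 1))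
    (hΨ : ∀ t, Ψ t = -2 * (Real.exp (γ * t) - 1) / D t) :
    (∀ t, 0 ≤ t → 0 < D t) ∧ Ψ 0 = 0 ∧
      ∀ t, 0 ≤ t → HasDerivAt Ψ ((α / 2) * (Ψ t) ^ 2 + β * Ψ t - 1) t := by
  have hnn : (0:ℝ) ≤ β ^ 2 + 2 * α := by positivity
  have hγ2 : γ ^ 2 = β ^ 2 + 2 * α := by rw [hγ, Real.sq_sqrt hnn]
  have habs : |β| < γ := by
    rw [hγ, ← Real.sqrt_sq_eq_abs]
    exact Real.sqrt_lt_sqrt (sq_nonneg β) (by linarith)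
  have h1 : 0 < γ - β := by linarith [le_abs_self β]
  have h2 : 0 < γ + β := by linarith [neg_abs_le β, le_abs_self β]
  have hDpos : ∀ t : ℝ, 0 < D t := by
    intro t
    have hE : 0 < Real.exp (γ * t) := Real.exp_pos _
    have : D t = (γ - β) * Real.exp (γ * t) + (γ + β) := by rw [hD]; ring
    rw [this]; positivity
  refine ⟨fun t _ => hDpos t, ?_, ?_⟩
  · rw [hΨ]; simp
  · intro t _
    set E := Real.exp (γ * t) with hE
    have hEder : HasDerivAt (fun s => Real.exp (γ * s)) (E * γ) t := by
      simpa [Function.comp_def] using (Real.hasDerivAt_exp (γ * t)).comp t ((hasDerivAt_id t).const_mul γ)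
    have hNder : HasDerivAt (fun s => -2 * (Real.exp (γ * s) - 1)) (-2 * (E * γ)) t :=
      ((hEder.sub_const 1).const_mul (-2))
    have hDder : HasDerivAt D (γ * (E * γ) - β * (E * γ)) t := by
      have : D = fun s => γ * (Real.exp (γ * s) + 1) - β * (Real.exp (γ * s) - 1) :=
        funext hD
      rw [this]
      exact ((hEder.add_const 1).const_mul γ).sub ((hEder.sub_const 1).const_mul β)
    have hΨfun : Ψ = fun s => -2 * (Real.exp (γ * s) - 1) / D s := funext hΨ
    have hDne : D t ≠ 0 := ne_of_gt (hDpos t)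
    have hder := hNder.div hDder hDne
    rw [show (fun s => -2 * (Real.exp (γ * s) - 1)) / D = Ψ from hΨfun.symm] at hder
    refine HasDerivAt.congr_deriv hder ?_
    rw [hΨ, hD t, ← hE]
    have hα2 : α = (γ ^ 2 - β ^ 2) / 2 := by linarith
    have hDt : γ * (E + 1) - β * (E - 1) ≠ 0 := by rw [← hD t]; exact hDne
    field_simp
    rw [hα2]
    ring
end

section
/- Let Φ : ℝ₊ → ℝ and Ψ : ℝ₊ → ℝ^d be twice continuously differentiable and satisfy the Riccati equations Φ' = F∘Ψ and Ψ' = R∘Ψ − λ. Then for every x ∈ ℝ^d and every τ ≥ 0, Φ''(τ) + ⟨Ψ''(τ), x⟩ − ⟨Ψ'(τ), B(x)⟩ = ⟨Ψ(τ), A(x)·Ψ'(τ)⟩. (This identity shows that the drift appearing in the Heath–Jarrow–Morton equation of a Hull–White extended affine model equals μ^{HJM}(x) = ⟨Ψ, A(x)Ψ'⟩.) -/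
open Matrix Set

lemma symm_dot {d : ℕ} {M : Matrix (Fin d) (Fin d) ℝ} (hM : M.IsSymm) (u v : Fin d → ℝ) :
    u ⬝ᵥ M.mulVec v = v ⬝ᵥ M.mulVec u := by
  rw [Matrix.dotProduct_mulVec, ← Matrix.mulVec_transpose, hM.eq, dotProduct_comm]

lemma quadDeriv {d : ℕ} (M : Matrix (Fin d) (Fin d) ℝ) {f : ℝ → Fin d → ℝ} {f' : Fin d → ℝ}
    {s : Set ℝ} {τ : ℝ} (hf : HasDerivWithinAt f f' s τ) :
    HasDerivWithinAt (fun t => f t ⬝ᵥ M.mulVec (f t))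
      (f' ⬝ᵥ M.mulVec (f τ) + f τ ⬝ᵥ M.mulVec f') s τ := by
  have hfi : ∀ i, HasDerivWithinAt (fun t => f t i) (f' i) s τ :=
    fun i => (hasDerivWithinAt_pi.mp hf) i
  have h : HasDerivWithinAt (fun t => ∑ i, ∑ j, f t i * (M i j * f t j))
      (∑ i, ∑ j, (f' i * (M i j * f τ j) + f τ i * (M i j * f' j))) s τ := by
    refine HasDerivWithinAt.fun_sum fun i _ => HasDerivWithinAt.fun_sum fun j _ => ?_
    exact (hfi i).mul ((hfi j).const_mul (M i j))
  convert h using 1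
  · ext t; simp [dotProduct, Matrix.mulVec, Finset.mul_sum]
  · simp [dotProduct, Matrix.mulVec, Finset.mul_sum, Finset.sum_add_distrib]

lemma linDeriv {d : ℕ} (c : Fin d → ℝ) {f : ℝ → Fin d → ℝ} {f' : Fin d → ℝ}
    {s : Set ℝ} {τ : ℝ} (hf : HasDerivWithinAt f f' s τ) :
    HasDerivWithinAt (fun t => f t ⬝ᵥ c) (f' ⬝ᵥ c) s τ := by
  have hfi : ∀ i, HasDerivWithinAt (fun t => f t i) (f' i) s τ :=
    fun i => (hasDerivWithinAt_pi.mp hf) i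
  have h : HasDerivWithinAt (fun t => ∑ i, f t i * c i) (∑ i, f' i * c i) s τ :=
    HasDerivWithinAt.fun_sum fun i _ => (hfi i).mul_const (c i)
  simpa [dotProduct] using h

lemma sum_smul_mulVec {d : ℕ} (x : Fin d → ℝ) (α : Fin d → Matrix (Fin d) (Fin d) ℝ)
    (v : Fin d → ℝ) : (∑ i, x i • α i).mulVec v = ∑ i, x i • (α i).mulVec v := by
  ext j
  simp only [Matrix.mulVec, dotProduct, Finset.sum_apply, Pi.smul_apply, Matrix.sum_apply,
    Matrix.smul_apply, smul_eq_mul, Finset.sum_mul, Finset.mul_sum]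
  rw [Finset.sum_comm]
  exact Finset.sum_congr rfl fun i _ => Finset.sum_congr rfl fun k _ => by ring

lemma dot_sum_smul {d : ℕ} (v x : Fin d → ℝ) (c : Fin d → Fin d → ℝ) :
    v ⬝ᵥ (∑ i, x i • c i) = ∑ i, x i * (v ⬝ᵥ c i) := by
  simp only [dotProduct, Finset.sum_apply, Pi.smul_apply, smul_eq_mul, Finset.mul_sum]
  rw [Finset.sum_comm]
  exact Finset.sum_congr rfl fun i _ => Finset.sum_congr rfl fun k _ => by ring

/-- The HJM drift identity for Hull–White extended affine models.
If (Φ, Ψ) solve the Riccati equations Φ' = F∘Ψ, Ψ' = R∘Ψ − λ, then for every x and τ ≥ 0,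
Φ''(τ) + ⟨Ψ''(τ), x⟩ − ⟨Ψ'(τ), B(x)⟩ = ⟨Ψ(τ), A(x)·Ψ'(τ)⟩. -/
theorem stmt_2 (d : ℕ) (hd : 1 ≤ d)
    (a : Matrix (Fin d) (Fin d) ℝ) (α : Fin d → Matrix (Fin d) (Fin d) ℝ)
    (b l : Fin d → ℝ) (β : Fin d → Fin d → ℝ)
    (ha : a.IsSymm) (hα : ∀ i, (α i).IsSymm)
    (F : (Fin d → ℝ) → ℝ) (R : (Fin d → ℝ) → Fin d → ℝ)
    (hF : ∀ u, F u = (1 / 2) * (u ⬝ᵥ a.mulVec u) + u ⬝ᵥ b)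
    (hR : ∀ u i, R u i = (1 / 2) * (u ⬝ᵥ (α i).mulVec u) + u ⬝ᵥ β i)
    (A : (Fin d → ℝ) → Matrix (Fin d) (Fin d) ℝ) (B : (Fin d → ℝ) → Fin d → ℝ)
    (hA : ∀ x, A x = a + ∑ i, x i • α i)
    (hB : ∀ x, B x = b + ∑ i, x i • β i)
    (Φ Φ' Φ'' : ℝ → ℝ) (Ψ Ψ' Ψ'' : ℝ → Fin d → ℝ)
    (hΦ' : ∀ τ ∈ Ici (0 : ℝ), HasDerivWithinAt Φ (Φ' τ) (Ici 0) τ)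
    (hΦ'' : ∀ τ ∈ Ici (0 : ℝ), HasDerivWithinAt Φ' (Φ'' τ) (Ici 0) τ)
    (hΦ''c : ContinuousOn Φ'' (Ici 0))
    (hΨ' : ∀ τ ∈ Ici (0 : ℝ), HasDerivWithinAt Ψ (Ψ' τ) (Ici 0) τ)
    (hΨ'' : ∀ τ ∈ Ici (0 : ℝ), HasDerivWithinAt Ψ' (Ψ'' τ) (Ici 0) τ)
    (hΨ''c : ContinuousOn Ψ'' (Ici 0))
    (hRic1 : ∀ τ ∈ Ici (0 : ℝ), Φ' τ = F (Ψ τ))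
    (hRic2 : ∀ τ ∈ Ici (0 : ℝ), Ψ' τ = R (Ψ τ) - l) :
    ∀ (x : Fin d → ℝ), ∀ τ ∈ Ici (0 : ℝ),
      Φ'' τ + Ψ'' τ ⬝ᵥ x - Ψ' τ ⬝ᵥ B x = Ψ τ ⬝ᵥ (A x).mulVec (Ψ' τ) := by
  intro x τ hτ
  have hu : UniqueDiffWithinAt ℝ (Ici (0:ℝ)) τ := uniqueDiffOn_Ici 0 τ hτ
  -- Φ'' formula
  have hg : HasDerivWithinAt (fun t => (1/2 : ℝ) * (Ψ t ⬝ᵥ a.mulVec (Ψ t)) + Ψ t ⬝ᵥ b)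
      ((1/2) * (Ψ' τ ⬝ᵥ a.mulVec (Ψ τ) + Ψ τ ⬝ᵥ a.mulVec (Ψ' τ)) + Ψ' τ ⬝ᵥ b) (Ici 0) τ :=
    ((quadDeriv a (hΨ' τ hτ)).const_mul (1/2)).add (linDeriv b (hΨ' τ hτ))
  have hg2 : HasDerivWithinAt (fun t => (1/2 : ℝ) * (Ψ t ⬝ᵥ a.mulVec (Ψ t)) + Ψ t ⬝ᵥ b)
      (Φ'' τ) (Ici 0) τ := by
    refine (hΦ'' τ hτ).congr (fun t ht => ?_) ?_
    · rw [hRic1 t ht, hF]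
    · rw [hRic1 τ hτ, hF]
  have hΦeq : Φ'' τ = Ψ' τ ⬝ᵥ a.mulVec (Ψ τ) + Ψ' τ ⬝ᵥ b := by
    have := (hg2.derivWithin hu).symm.trans (hg.derivWithin hu)
    rw [this, symm_dot ha (Ψ τ) (Ψ' τ)]; ring
  -- Ψ'' formula componentwise
  have hΨeq : ∀ i, Ψ'' τ i = Ψ' τ ⬝ᵥ (α i).mulVec (Ψ τ) + Ψ' τ ⬝ᵥ β i := by
    intro i
    have hgi : HasDerivWithinAt
        (fun t => (1/2 : ℝ) * (Ψ t ⬝ᵥ (α i).mulVec (Ψ t)) + Ψ t ⬝ᵥ β i - l i)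
        ((1/2) * (Ψ' τ ⬝ᵥ (α i).mulVec (Ψ τ) + Ψ τ ⬝ᵥ (α i).mulVec (Ψ' τ)) + Ψ' τ ⬝ᵥ β i)
        (Ici 0) τ :=
      (((quadDeriv (α i) (hΨ' τ hτ)).const_mul (1/2)).add
        (linDeriv (β i) (hΨ' τ hτ))).sub_const (l i)
    have hgi2 : HasDerivWithinAt
        (fun t => (1/2 : ℝ) * (Ψ t ⬝ᵥ (α i).mulVec (Ψ t)) + Ψ t ⬝ᵥ β i - l i)
        (Ψ'' τ i) (Ici 0) τ := by
      refine ((hasDerivWithinAt_pi.mp (hΨ'' τ hτ)) i).congr (fun t ht => ?_) ?_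
      · have := congrFun (hRic2 t ht) i
        simp only [Pi.sub_apply] at this
        rw [this, hR]
      · have := congrFun (hRic2 τ hτ) i
        simp only [Pi.sub_apply] at this
        rw [this, hR]
    have := (hgi2.derivWithin hu).symm.trans (hgi.derivWithin hu)
    rw [this, symm_dot (hα i) (Ψ τ) (Ψ' τ)]; ring
  -- assemble
  have hAsymm : (A x).IsSymm := by
    rw [hA, Matrix.IsSymm, Matrix.transpose_add, ha.eq]
    congr 1
    rw [Matrix.transpose_sum]
    exact Finset.sum_congr rfl fun i _ => by rw [Matrix.transpose_smul, (hα i).eq]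
  rw [symm_dot hAsymm (Ψ τ) (Ψ' τ), hA, hB, Matrix.add_mulVec, sum_smul_mulVec,
    dotProduct_add, dotProduct_add]
  rw [show (∑ i, x i • (α i).mulVec (Ψ τ)) = ∑ i, x i • ((α i).mulVec (Ψ τ)) from rfl,
    dot_sum_smul, dot_sum_smul]
  have hdx : Ψ'' τ ⬝ᵥ x = ∑ i, x i * Ψ'' τ i := by
    simp [dotProduct, mul_comm]
  rw [hΦeq, hdx]
  simp only [hΨeq, mul_add, Finset.sum_add_distrib]
  ring
end

section
/- Let d ≥ 1, ℓ ∈ ℝ, λ ∈ ℝ^d with ⟨λ, e₁⟩ ≠ 0, and let Φ : ℝ₊ → ℝ and Ψ : ℝ₊ → ℝ^d be twice continuously differentiable with Φ'(0) = 0 and Ψ'(0) = −λ. Let x ∈ ℝ^d and let h : ℝ₊ → ℝ be continuously differentiable with h(0) = ℓ + ⟨λ, x⟩. Then the Volterra integral equation h = H(θ, x), i.e. h(τ) = ℓ − ∫₀^τ θ(s)⟨Ψ'(τ−s), e₁⟩ ds − Φ'(τ) − ⟨Ψ'(τ), x⟩ for all τ ≥ 0, has a unique continuous solution θ : ℝ₊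 → ℝ (the calibrated Hull–White extension C(h, x)). -/
open Matrix Set

section Stmt5Aux
open MeasureTheory intervalIntegral Nat

private lemma cont_conv' {p q : ℝ → ℝ} (hp : Continuous p) (hq : Continuous q) :
    Continuous fun τ => ∫ s in (0:ℝ)..τ, p s * q (τ - s) := by
  exact intervalIntegral.continuous_parametric_intervalIntegral_of_continuous
    (f := fun τ s => p s * q (τ - s)) (by fun_prop) continuous_id

private lemma prim_hasDerivAt' {g : ℝ → ℝ} (hg : Continuous g) (τ : ℝ) :
    HasDerivAt (fun t => ∫ s in (0:ℝ)..t, g s) (g τ) τ :=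
  (hg.integral_hasStrictDerivAt 0 τ).hasDerivAt

private lemma prim_cont' {g : ℝ → ℝ} (hg : Continuous g) :
    Continuous fun t => ∫ s in (0:ℝ)..t, g s :=
  continuous_iff_continuousAt.2 fun τ => (prim_hasDerivAt' hg τ).continuousAt

private lemma gronwall_zero' {g : ℝ → ℝ} (hg : Continuous g) (C b : ℝ)
    (hb : ∀ τ ∈ Icc (0:ℝ) b, |g τ| ≤ C * ∫ s in (0:ℝ)..τ, |g s|) :
    ∀ τ ∈ Icc (0:ℝ) b, g τ = 0 := by
  set f : ℝ → ℝ := fun t => ∫ s in (0:ℝ)..t, |g s| with hf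
  have hfd : ∀ t : ℝ, HasDerivAt f (|g t|) t := prim_hasDerivAt' hg.abs
  have hfnn : ∀ t, 0 ≤ t → 0 ≤ f t := fun t ht =>
    intervalIntegral.integral_nonneg ht (fun s _ => abs_nonneg _)
  have key : ∀ t ∈ Icc (0:ℝ) b, ‖f t‖ ≤ gronwallBound 0 C 0 (t - 0) := by
    apply norm_le_gronwallBound_of_norm_deriv_right_le
      (f' := fun t => |g t|) (fun t _ => (hfd t).continuousAt.continuousWithinAt)
      (fun t _ => (hfd t).hasDerivWithinAt)
    · simp [hf]
    · intro t ht
      have h1 := hb t ⟨ht.1, ht.2.le⟩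
      have h2 : ‖f t‖ = f t := Real.norm_of_nonneg (hfnn t ht.1)
      rw [Real.norm_eq_abs, abs_abs, h2, add_zero]
      exact h1
  intro τ hτ
  have h0 : f τ = 0 := by
    have := key τ hτ
    rw [gronwallBound_ε0, Real.norm_eq_abs] at this
    simp only [mul_zero, zero_mul] at this
    exact abs_nonpos_iff.mp (le_trans this (by simp))
  have h3 : |g τ| ≤ C * f τ := hb τ hτ
  rw [h0, mul_zero] at h3
  exact abs_nonpos_iff.mp h3

private lemma triangle_swap' {p q : ℝ → ℝ} (hp : Continuous p) (hq : Continuous q) {τ : ℝ}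
    (hτ : 0 ≤ τ) :
    (∫ s in (0:ℝ)..τ, p s * ∫ u in s..τ, q (u - s)) =
    ∫ u in (0:ℝ)..τ, ∫ s in (0:ℝ)..u, p s * q (u - s) := by
  set μ : Measure ℝ := volume.restrict (Ioc 0 τ) with hμ
  haveI : IsFiniteMeasure μ := ⟨by
    rw [hμ, Measure.restrict_apply_univ]; exact measure_Ioc_lt_top⟩
  set F : ℝ → ℝ → ℝ := fun s => (Ici s).indicator (fun u => p s * q (u - s)) with hF
  have hFval : ∀ s u : ℝ, F s u = if s ≤ u then p s * q (u - s) else 0 := by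
    intro s u; simp [hF, Set.indicator_apply, mem_Ici]
  have hmeas : AEStronglyMeasurable (Function.uncurry F) (μ.prod μ) := by
    have : Function.uncurry F =
        Set.indicator {z : ℝ × ℝ | z.1 ≤ z.2} (fun z => p z.1 * q (z.2 - z.1)) := by
      funext z
      simp only [Function.uncurry, hFval, Set.indicator_apply, mem_setOf_eq]
    rw [this]
    exact ((((hp.comp continuous_fst).mul (hq.comp (continuous_snd.sub
      continuous_fst))).measurable).indicator
      (measurableSet_le measurable_fst measurable_snd)).aestronglyMeasurable
  obtain ⟨Cp, hCp⟩ := isCompact_Icc.exists_bound_of_continuousOn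
    (s := Icc (0:ℝ) τ) hp.continuousOn
  obtain ⟨Cq, hCq⟩ := isCompact_Icc.exists_bound_of_continuousOn
    (s := Icc (-τ) τ) hq.continuousOn
  have hCp0 : 0 ≤ Cp := le_trans (norm_nonneg _) (hCp 0 ⟨le_refl _, hτ⟩)
  have hCq0 : 0 ≤ Cq := le_trans (norm_nonneg _) (hCq 0 ⟨neg_nonpos.2 hτ, hτ⟩)
  have hint : Integrable (Function.uncurry F) (μ.prod μ) := by
    apply (integrable_const (Cp * Cq)).mono' hmeas
    rw [hμ, Measure.prod_restrict]
    refine (ae_restrict_iff' (measurableSet_Ioc.prod measurableSet_Ioc)).2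
      (Filter.Eventually.of_forall ?_)
    rintro ⟨s, u⟩ ⟨hs, hu⟩
    simp only [Function.uncurry, hFval]
    by_cases hsu : s ≤ u
    · rw [if_pos hsu, Real.norm_eq_abs, abs_mul]
      have h1 : |p s| ≤ Cp := by
        have := hCp s ⟨hs.1.le, hs.2⟩; rwa [Real.norm_eq_abs] at this
      have h2 : |q (u - s)| ≤ Cq := by
        have := hCq (u - s) ⟨by linarith [hs.2, hu.1.le], by linarith [hs.1.le, hu.2]⟩
        rwa [Real.norm_eq_abs] at this
      exact mul_le_mul h1 h2 (abs_nonneg _) hCp0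
    · rw [if_neg hsu]; simp [mul_nonneg hCp0 hCq0]
  have hFslice1 : ∀ s a b : ℝ, IntervalIntegrable (F s) volume a b := by
    intro s a b
    have hc : Continuous fun u => p s * q (u - s) :=
      continuous_const.mul (hq.comp (continuous_id.sub continuous_const))
    rw [intervalIntegrable_iff]
    exact hc.integrableOn_uIoc.indicator measurableSet_Ici
  have hFslice2 : ∀ u a b : ℝ, IntervalIntegrable (fun s => F s u) volume a b := by
    intro u a b
    have heq : (fun s => F s u) = (Iic u).indicator (fun s => p s * q (u - s)) := by
      funext s; simp [hFval, Set.indicator_apply, mem_Iic]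
    have hc : Continuous fun s => p s * q (u - s) :=
      hp.mul (hq.comp (continuous_const.sub continuous_id))
    rw [heq, intervalIntegrable_iff]
    exact hc.integrableOn_uIoc.indicator measurableSet_Iic
  have hL : (∫ s in (0:ℝ)..τ, p s * ∫ u in s..τ, q (u - s)) = ∫ s, (∫ u, F s u ∂μ) ∂μ := by
    rw [intervalIntegral.integral_of_le hτ]
    apply setIntegral_congr_fun measurableSet_Ioc
    intro s hs
    have hzero : (∫ u in (0:ℝ)..s, F s u) = 0 := by
      rw [intervalIntegral.integral_of_le hs.1.le, integral_Ioc_eq_integral_Ioo]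
      rw [setIntegral_congr_fun measurableSet_Ioo
        (g := fun _ => (0:ℝ))
        (fun u hu => indicator_of_notMem (by simp only [mem_Ici, not_le]; exact hu.2) _)]
      simp
    have hmain : (∫ u in s..τ, F s u) = ∫ u in s..τ, p s * q (u - s) := by
      apply intervalIntegral.integral_congr
      intro u hu
      rw [uIcc_of_le hs.2] at hu
      exact indicator_of_mem (mem_Ici.2 hu.1) _
    calc p s * ∫ u in s..τ, q (u - s) = ∫ u in s..τ, p s * q (u - s) := by
          rw [intervalIntegral.integral_const_mul]
      _ = (∫ u in (0:ℝ)..s, F s u) + ∫ u in s..τ, F s u := by rw [hzero, hmain, zero_add]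
      _ = ∫ u in (0:ℝ)..τ, F s u :=
          integral_add_adjacent_intervals (hFslice1 s 0 s) (hFslice1 s s τ)
      _ = ∫ u, F s u ∂μ := by rw [intervalIntegral.integral_of_le hτ]
  have hR : (∫ u in (0:ℝ)..τ, ∫ s in (0:ℝ)..u, p s * q (u - s)) = ∫ u, (∫ s, F s u ∂μ) ∂μ := by
    rw [intervalIntegral.integral_of_le hτ]
    apply setIntegral_congr_fun measurableSet_Ioc
    intro u hu
    have hmain : (∫ s in (0:ℝ)..u, F s u) = ∫ s in (0:ℝ)..u, p s * q (u - s) := by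
      apply intervalIntegral.integral_congr
      intro s hs
      rw [uIcc_of_le hu.1.le] at hs
      exact indicator_of_mem (mem_Ici.2 hs.2) _
    have hzero : (∫ s in u..τ, F s u) = 0 := by
      rw [intervalIntegral.integral_of_le hu.2, integral_Ioc_eq_integral_Ioo]
      rw [setIntegral_congr_fun measurableSet_Ioo
        (g := fun _ => (0:ℝ))
        (fun s hs => indicator_of_notMem (by simp only [mem_Ici, not_le]; exact hs.1) _)]
      simp
    calc (∫ s in (0:ℝ)..u, p s * q (u - s))
        = (∫ s in (0:ℝ)..u, F s u) + ∫ s in u..τ, F s u := by rw [hzero, hmain, add_zero]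
      _ = ∫ s in (0:ℝ)..τ, F s u :=
          integral_add_adjacent_intervals (hFslice2 u 0 u) (hFslice2 u u τ)
      _ = ∫ s, F s u ∂μ := by rw [intervalIntegral.integral_of_le hτ]
  rw [hL, hR]
  exact MeasureTheory.integral_integral_swap hint

private lemma volterra' {a κ : ℝ → ℝ} (ha : Continuous a) (hκ : Continuous κ) :
    ∃ θ : ℝ → ℝ, ContinuousOn θ (Ici 0) ∧ ∀ τ, 0 ≤ τ →
      θ τ = a τ + ∫ s in (0:ℝ)..τ, θ s * κ (τ - s) := by
  set u : ℕ → ℝ → ℝ := fun n => Nat.rec a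
    (fun _ un => fun τ => ∫ s in (0:ℝ)..τ, un s * κ (τ - s)) n with hu
  have hu0 : u 0 = a := rfl
  have huS : ∀ n, u (n + 1) = fun τ => ∫ s in (0:ℝ)..τ, u n s * κ (τ - s) := fun n => rfl
  have hucont : ∀ n, Continuous (u n) := by
    intro n; induction n with
    | zero => exact ha
    | succ n ih => rw [huS]; exact cont_conv' ih hκ
  have hbd : ∀ T : ℝ, 0 ≤ T → ∃ M K : ℝ, 0 ≤ M ∧ 0 ≤ K ∧
      ∀ n : ℕ, ∀ τ ∈ Icc (0:ℝ) T, |u n τ| ≤ M * (K * τ) ^ n / n ! := by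
    intro T hT
    obtain ⟨M₀, hM₀⟩ := isCompact_Icc.exists_bound_of_continuousOn
      (s := Icc (0:ℝ) T) ha.continuousOn
    obtain ⟨K₀, hK₀⟩ := isCompact_Icc.exists_bound_of_continuousOn
      (s := Icc (0:ℝ) T) hκ.continuousOn
    refine ⟨max M₀ 0, max K₀ 0, le_max_right _ _, le_max_right _ _, ?_⟩
    set M := max M₀ 0; set K := max K₀ 0
    have hM : 0 ≤ M := le_max_right _ _
    have hK : 0 ≤ K := le_max_right _ _
    intro n
    induction n with
    | zero =>
      intro τ hτ
      have h1 : |a τ| ≤ M₀ := by rw [← Real.norm_eq_abs]; exact hM₀ τ hτ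
      calc |u 0 τ| ≤ M := by rw [hu0]; exact le_trans h1 (le_max_left _ _)
        _ = M * (K * τ) ^ 0 / 0 ! := by simp
    | succ n ih =>
      intro τ hτ
      have hτ0 : 0 ≤ τ := hτ.1
      have step1 : |u (n+1) τ| ≤ ∫ s in (0:ℝ)..τ, |u n s * κ (τ - s)| := by
        rw [huS]; exact intervalIntegral.abs_integral_le_integral_abs hτ0
      have hκb : ∀ s ∈ Icc (0:ℝ) τ, |κ (τ - s)| ≤ K := by
        intro s hs
        refine le_trans ?_ (le_max_left _ _)
        rw [← Real.norm_eq_abs]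
        exact hK₀ _ ⟨by linarith [hs.2], by linarith [hs.1, hτ.2]⟩
      have step2 : (∫ s in (0:ℝ)..τ, |u n s * κ (τ - s)|)
          ≤ ∫ s in (0:ℝ)..τ, (M * K ^ (n+1) / n !) * s ^ n := by
        apply intervalIntegral.integral_mono_on hτ0
        · exact (((hucont n).mul
            (hκ.comp (continuous_const.sub continuous_id))).abs).intervalIntegrable _ _
        · exact (Continuous.intervalIntegrable (by continuity) _ _)
        · intro s hs
          rw [abs_mul]
          have h1 : |u n s| ≤ M * (K * s) ^ n / n ! := ih s ⟨hs.1, le_trans hs.2 hτ.2⟩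
          have h2 : |κ (τ - s)| ≤ K := hκb s hs
          calc |u n s| * |κ (τ - s)| ≤ (M * (K * s) ^ n / n !) * K := by
                apply mul_le_mul h1 h2 (abs_nonneg _)
                exact div_nonneg (mul_nonneg hM (pow_nonneg (mul_nonneg hK hs.1) n))
                  (Nat.cast_nonneg _)
            _ = (M * K ^ (n+1) / n !) * s ^ n := by rw [mul_pow]; ring
      have step3 : (∫ s in (0:ℝ)..τ, (M * K ^ (n+1) / n !) * s ^ n)
          = M * (K * τ) ^ (n+1) / (n+1)! := by
        rw [intervalIntegral.integral_const_mul, integral_pow]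
        have hf : ((n !) : ℝ) ≠ 0 := Nat.cast_ne_zero.mpr (Nat.factorial_ne_zero n)
        have hn1 : ((n:ℝ) + 1) ≠ 0 := by positivity
        rw [mul_pow]
        push_cast [Nat.factorial_succ]
        field_simp
        ring
      calc |u (n+1) τ| ≤ _ := step1
        _ ≤ _ := step2
        _ = _ := step3
  set θ : ℝ → ℝ := fun τ => ∑' n, u n τ with hθ
  have hsummand : ∀ T : ℝ, 0 ≤ T → ∀ M K : ℝ,
      Summable (fun n : ℕ => M * (K * T) ^ n / n !) := by
    intro T hT M K
    have := (Real.summable_pow_div_factorial (K * T)).mul_left M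
    exact this.congr (fun n => by ring)
  have hsumm : ∀ τ : ℝ, 0 ≤ τ → Summable (fun n => u n τ) := by
    intro τ hτ
    obtain ⟨M, K, hM, hK, hb⟩ := hbd τ hτ
    exact Summable.of_norm_bounded (hsummand τ hτ M K)
      (fun n => by rw [Real.norm_eq_abs]; exact hb n τ ⟨hτ, le_refl _⟩)
  have hθcont : ContinuousOn θ (Ici 0) := by
    intro τ₀ hτ₀
    have hτ₀' : (0:ℝ) ≤ τ₀ := hτ₀
    obtain ⟨M, K, hM, hK, hb⟩ := hbd (τ₀ + 1) (by linarith)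
    have hco : ContinuousOn θ (Icc 0 (τ₀ + 1)) := by
      apply continuousOn_tsum (fun n => (hucont n).continuousOn)
        (hsummand (τ₀+1) (by linarith) M K)
      intro n τ hτ
      rw [Real.norm_eq_abs]
      refine le_trans (hb n τ hτ) ?_
      have h1 : (K * τ) ^ n ≤ (K * (τ₀ + 1)) ^ n :=
        pow_le_pow_left₀ (mul_nonneg hK hτ.1) (mul_le_mul_of_nonneg_left hτ.2 hK) n
      exact (div_le_div_iff_of_pos_right (Nat.cast_pos.2 (Nat.factorial_pos n))).2
        (mul_le_mul_of_nonneg_left h1 hM)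
    have hmem : Icc 0 (τ₀ + 1) ∈ nhdsWithin τ₀ (Ici 0) := by
      rw [mem_nhdsWithin]
      exact ⟨Iio (τ₀ + 1), isOpen_Iio, mem_Iio.2 (lt_add_one τ₀),
        fun y hy => ⟨hy.2, hy.1.le⟩⟩
    exact (hco.continuousWithinAt ⟨hτ₀', by linarith⟩).mono_of_mem_nhdsWithin hmem
  refine ⟨θ, hθcont, ?_⟩
  intro τ hτ
  obtain ⟨M, K, hM, hK, hb⟩ := hbd τ hτ
  have hFint : ∀ n : ℕ, Integrable (fun s => u n s * κ (τ - s))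
      (volume.restrict (Ioc 0 τ)) :=
    fun n => ((hucont n).mul (hκ.comp (continuous_const.sub continuous_id))).integrableOn_Ioc
  have hFsum : Summable fun n => ∫ s in Ioc (0:ℝ) τ, ‖u n s * κ (τ - s)‖ := by
    obtain ⟨K₀, hK₀⟩ := isCompact_Icc.exists_bound_of_continuousOn
      (s := Icc (0:ℝ) τ) hκ.continuousOn
    set K₁ := max K₀ 0 with hK₁
    have hK₁0 : 0 ≤ K₁ := le_max_right _ _
    apply Summable.of_nonneg_of_le
      (fun n => integral_nonneg (fun s => norm_nonneg _))
      (f := fun n => (M * (K * τ) ^ n / n !) * K₁ * τ)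
      (g := fun n => _)
    · intro n
      have hbound : ∀ s ∈ Ioc (0:ℝ) τ,
          ‖u n s * κ (τ - s)‖ ≤ (M * (K * τ) ^ n / n !) * K₁ := by
        intro s hs
        rw [Real.norm_eq_abs, abs_mul]
        have h1 : |u n s| ≤ M * (K * τ) ^ n / n ! := by
          refine le_trans (hb n s ⟨hs.1.le, hs.2⟩) ?_
          have h1' : (K * s) ^ n ≤ (K * τ) ^ n :=
            pow_le_pow_left₀ (mul_nonneg hK hs.1.le) (mul_le_mul_of_nonneg_left hs.2 hK) n
          exact (div_le_div_iff_of_pos_right (Nat.cast_pos.2 (Nat.factorial_pos n))).2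
            (mul_le_mul_of_nonneg_left h1' hM)
        have h2 : |κ (τ - s)| ≤ K₁ := by
          refine le_trans ?_ (le_max_left _ _)
          rw [← Real.norm_eq_abs]
          exact hK₀ _ ⟨by linarith [hs.2], by linarith [hs.1.le]⟩
        apply mul_le_mul h1 h2 (abs_nonneg _)
        positivity
      calc (∫ s in Ioc (0:ℝ) τ, ‖u n s * κ (τ - s)‖)
          ≤ ∫ _s in Ioc (0:ℝ) τ, (M * (K * τ) ^ n / n !) * K₁ := by
            apply setIntegral_mono_on ((hFint n).norm) (integrableOn_const ?_)
              measurableSet_Ioc hbound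
            rw [Real.volume_Ioc]; exact ENNReal.ofReal_ne_top
        _ = (M * (K * τ) ^ n / n !) * K₁ * τ := by
            rw [setIntegral_const, smul_eq_mul, Real.volume_real_Ioc_of_le hτ]
            ring
    · have := ((hsummand τ hτ M K).mul_right K₁).mul_right τ
      exact this.congr (fun n => by ring)
  have hswap : ∑' n, (∫ s in Ioc (0:ℝ) τ, u n s * κ (τ - s))
      = ∫ s in Ioc (0:ℝ) τ, θ s * κ (τ - s) := by
    rw [integral_tsum_of_summable_integral_norm hFint hFsum]
    apply setIntegral_congr_fun measurableSet_Ioc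
    intro s hs
    rw [hθ]
    exact (tsum_mul_right)
  have hterm : ∀ n, (∫ s in Ioc (0:ℝ) τ, u n s * κ (τ - s)) = u (n+1) τ := by
    intro n
    rw [huS]
    exact (intervalIntegral.integral_of_le hτ).symm
  have hshift : θ τ = a τ + ∑' n, u (n+1) τ := by
    calc θ τ = ∑' n, u n τ := rfl
      _ = u 0 τ + ∑' n, u (n+1) τ := Summable.tsum_eq_zero_add (hsumm τ hτ)
      _ = a τ + ∑' n, u (n+1) τ := by rw [hu0]
  rw [hshift, intervalIntegral.integral_of_le hτ, ← hswap]
  congr 1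
  exact tsum_congr (fun n => (hterm n).symm)

end Stmt5Aux


/-- Calibration of Hull–White extensions to initial forward rate curves.
Given Riccati-type data (Φ, Ψ) with Φ'(0) = 0, Ψ'(0) = −λ, ⟨λ, e₁⟩ ≠ 0, and a C¹ curve h
with h(0) = ℓ + ⟨λ, x⟩, the Volterra integral equation
h(τ) = ℓ − ∫₀^τ θ(s)⟨Ψ'(τ−s), e₁⟩ ds − Φ'(τ) − ⟨Ψ'(τ), x⟩
has a unique continuous solution θ. -/
theorem stmt_5 (d : ℕ) (hd : 1 ≤ d) (ℓ : ℝ) (l : Fin d → ℝ)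
    (e₁ : Fin d → ℝ) (he₁ : e₁ = fun j : Fin d => if (j : ℕ) = 0 then (1 : ℝ) else 0)
    (hle₁ : l ⬝ᵥ e₁ ≠ 0)
    (Φ Φ' Φ'' : ℝ → ℝ) (Ψ Ψ' Ψ'' : ℝ → Fin d → ℝ)
    (hΦ' : ∀ τ ∈ Ici (0 : ℝ), HasDerivWithinAt Φ (Φ' τ) (Ici 0) τ)
    (hΦ'' : ∀ τ ∈ Ici (0 : ℝ), HasDerivWithinAt Φ' (Φ'' τ) (Ici 0) τ)
    (hΦ''c : ContinuousOn Φ'' (Ici 0))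
    (hΨ' : ∀ τ ∈ Ici (0 : ℝ), HasDerivWithinAt Ψ (Ψ' τ) (Ici 0) τ)
    (hΨ'' : ∀ τ ∈ Ici (0 : ℝ), HasDerivWithinAt Ψ' (Ψ'' τ) (Ici 0) τ)
    (hΨ''c : ContinuousOn Ψ'' (Ici 0))
    (hΦ'0 : Φ' 0 = 0) (hΨ'0 : Ψ' 0 = -l)
    (x : Fin d → ℝ) (h h' : ℝ → ℝ)
    (hh' : ∀ τ ∈ Ici (0 : ℝ), HasDerivWithinAt h (h' τ) (Ici 0) τ)
    (hh'c : ContinuousOn h' (Ici 0))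
    (hh0 : h 0 = ℓ + l ⬝ᵥ x) :
    ∃ θ : ℝ → ℝ, ContinuousOn θ (Ici 0) ∧
      (∀ τ ∈ Ici (0 : ℝ),
        h τ = ℓ - (∫ s in (0 : ℝ)..τ, θ s * (Ψ' (τ - s) ⬝ᵥ e₁)) - Φ' τ - Ψ' τ ⬝ᵥ x) ∧
      ∀ θ' : ℝ → ℝ, ContinuousOn θ' (Ici 0) →
        (∀ τ ∈ Ici (0 : ℝ),
          h τ = ℓ - (∫ s in (0 : ℝ)..τ, θ' s * (Ψ' (τ - s) ⬝ᵥ e₁)) - Φ' τ - Ψ' τ ⬝ᵥ x) →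
        EqOn θ θ' (Ici 0) := by
  classical
  -- basic continuity facts
  have hΦ'c : ContinuousOn Φ' (Ici 0) := fun t ht => (hΦ'' t ht).continuousWithinAt
  have hhc : ContinuousOn h (Ici 0) := fun t ht => (hh' t ht).continuousWithinAt
  -- scalar dot-product derivatives and continuity
  have hdot : ∀ v : Fin d → ℝ, ∀ t ∈ Ici (0:ℝ),
      HasDerivWithinAt (fun u => Ψ' u ⬝ᵥ v) (Ψ'' t ⬝ᵥ v) (Ici 0) t := by
    intro v t ht
    have hp := hasDerivWithinAt_pi.1 (hΨ'' t ht)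
    simp only [dotProduct]
    exact HasDerivWithinAt.fun_sum (fun j _ => (hp j).mul_const (v j))
  have hdotc : ∀ v : Fin d → ℝ, ContinuousOn (fun t => Ψ'' t ⬝ᵥ v) (Ici 0) := by
    intro v
    simp only [dotProduct]
    exact continuousOn_finset_sum _ fun j _ =>
      ((continuous_apply j).comp_continuousOn hΨ''c).mul continuousOn_const
  have hdotc' : ∀ v : Fin d → ℝ, ContinuousOn (fun t => Ψ' t ⬝ᵥ v) (Ici 0) :=
    fun v t ht => (hdot v t ht).continuousWithinAt
  -- the nonzero constant `c`
  set c : ℝ := Ψ' 0 ⬝ᵥ e₁ with hcdef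
  have hc0 : c ≠ 0 := by
    rw [hcdef, hΨ'0, neg_dotProduct]
    exact neg_ne_zero.2 hle₁
  -- truncation
  have htr : Continuous fun t : ℝ => max t 0 := continuous_id.max continuous_const
  have htrm : ∀ t : ℝ, max t 0 ∈ Ici (0:ℝ) := fun t => le_max_right t 0
  have htre : ∀ t : ℝ, 0 ≤ t → max t 0 = t := fun t ht => max_eq_left ht
  -- globally continuous extensions
  set K2 : ℝ → ℝ := fun t => Ψ'' (max t 0) ⬝ᵥ e₁ with hK2def
  have hK2 : Continuous K2 := (hdotc e₁).comp_continuous htr htrm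
  have hK2e : ∀ t, 0 ≤ t → K2 t = Ψ'' t ⬝ᵥ e₁ := by
    intro t ht; simp only [hK2def]; rw [htre t ht]
  set B : ℝ → ℝ := fun t => h' (max t 0) + Φ'' (max t 0) + Ψ'' (max t 0) ⬝ᵥ x with hBdef
  have hB : Continuous B :=
    ((hh'c.comp_continuous htr htrm).add (hΦ''c.comp_continuous htr htrm)).add
      ((hdotc x).comp_continuous htr htrm)
  have hBe : ∀ t, 0 ≤ t → B t = h' t + Φ'' t + Ψ'' t ⬝ᵥ x := by
    intro t ht; simp only [hBdef]; rw [htre t ht]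
  -- solve the Volterra equation of the second kind for θ
  set av : ℝ → ℝ := fun t => -(B t) / c with havdef
  set κv : ℝ → ℝ := fun t => -(K2 t) / c with hκvdef
  have hav : Continuous av := (hB.neg).div_const c
  have hκv : Continuous κv := (hK2.neg).div_const c
  obtain ⟨θ₀, hθ₀c, hθ₀eq⟩ := volterra' hav hκv
  set θ : ℝ → ℝ := fun t => θ₀ (max t 0) with hθdef
  have hθc : Continuous θ := hθ₀c.comp_continuous htr htrm
  have hθe : ∀ t, 0 ≤ t → θ t = θ₀ t := by
    intro t ht; simp only [hθdef]; rw [htre t ht]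
  have hθeq : ∀ τ, 0 ≤ τ → θ τ = av τ + ∫ s in (0:ℝ)..τ, θ s * κv (τ - s) := by
    intro τ hτ
    have h2 : (∫ s in (0:ℝ)..τ, θ₀ s * κv (τ - s))
        = ∫ s in (0:ℝ)..τ, θ s * κv (τ - s) := by
      apply intervalIntegral.integral_congr
      intro s hs
      rw [uIcc_of_le hτ] at hs
      show θ₀ s * κv (τ - s) = θ s * κv (τ - s)
      rw [hθe s hs.1]
    rw [hθe τ hτ, hθ₀eq τ hτ, h2]
  -- primitive of K2
  set V : ℝ → ℝ := fun t => ∫ v in (0:ℝ)..t, K2 v with hVdef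
  have hV : Continuous V := prim_cont' hK2
  have hftc : ∀ t, 0 ≤ t → V t = Ψ' t ⬝ᵥ e₁ - c := by
    intro t ht
    have hsub : Icc (0:ℝ) t ⊆ Ici 0 := Icc_subset_Ici_self
    have hder : ∀ v ∈ Ioo (0:ℝ) t,
        HasDerivWithinAt (fun u => Ψ' u ⬝ᵥ e₁) (K2 v) (Ioi v) v := by
      intro v hv
      have hD : HasDerivAt (fun u => Ψ' u ⬝ᵥ e₁) (Ψ'' v ⬝ᵥ e₁) v :=
        (hdot e₁ v hv.1.le).hasDerivAt (Ici_mem_nhds hv.1)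
      rw [hK2e v hv.1.le]
      exact hD.hasDerivWithinAt
    have heq := intervalIntegral.integral_eq_sub_of_hasDeriv_right_of_le ht
      ((hdotc' e₁).mono hsub) hder (hK2.intervalIntegrable _ _)
    simp only [hVdef]
    rw [heq, hcdef]
  -- the key convolution identity
  have key : ∀ P : ℝ → ℝ, Continuous P → ∀ τ, 0 ≤ τ →
      (∫ s in (0:ℝ)..τ, P s * (Ψ' (τ - s) ⬝ᵥ e₁))
        = c * (∫ s in (0:ℝ)..τ, P s)
          + ∫ u in (0:ℝ)..τ, ∫ s in (0:ℝ)..u, P s * K2 (u - s) := by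
    intro P hP τ hτ
    have h1 : (∫ s in (0:ℝ)..τ, P s * (Ψ' (τ - s) ⬝ᵥ e₁))
        = ∫ s in (0:ℝ)..τ, (P s * c + P s * V (τ - s)) := by
      apply intervalIntegral.integral_congr
      intro s hs
      rw [uIcc_of_le hτ] at hs
      show P s * (Ψ' (τ - s) ⬝ᵥ e₁) = P s * c + P s * V (τ - s)
      rw [hftc (τ - s) (by linarith [hs.2])]
      ring
    have h2 : (∫ s in (0:ℝ)..τ, (P s * c + P s * V (τ - s)))
        = c * (∫ s in (0:ℝ)..τ, P s) + ∫ s in (0:ℝ)..τ, P s * V (τ - s) := by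
      have i1 : IntervalIntegrable (fun s => P s * c) MeasureTheory.volume 0 τ :=
        (hP.mul continuous_const).intervalIntegrable _ _
      have i2 : IntervalIntegrable (fun s => P s * V (τ - s)) MeasureTheory.volume 0 τ :=
        (hP.mul (hV.comp (continuous_const.sub continuous_id))).intervalIntegrable _ _
      rw [intervalIntegral.integral_add i1 i2, intervalIntegral.integral_mul_const]
      ring
    have h3 : (∫ s in (0:ℝ)..τ, P s * V (τ - s))
        = ∫ s in (0:ℝ)..τ, P s * ∫ u in s..τ, K2 (u - s) := by
      apply intervalIntegral.integral_congr
      intro s hs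
      show P s * V (τ - s) = P s * ∫ u in s..τ, K2 (u - s)
      congr 1
      rw [intervalIntegral.integral_comp_sub_right K2 s, sub_self]
    rw [h1, h2, h3, triangle_swap' hP hK2 hτ]
  -- auxiliary primitives for the existence direction
  set w : ℝ → ℝ := fun t => ∫ s in (0:ℝ)..t, θ s * K2 (t - s) with hwdef
  have hwc : Continuous w := cont_conv' hθc hK2
  set Θp : ℝ → ℝ := fun t => ∫ s in (0:ℝ)..t, θ s with hΘdef
  set Wp : ℝ → ℝ := fun t => ∫ s in (0:ℝ)..t, w s with hWdef
  have hΘc : Continuous Θp := prim_cont' hθc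
  have hWc : Continuous Wp := prim_cont' hwc
  -- the differentiated equation
  have hode : ∀ t, 0 ≤ t → h' t + (c * θ t + w t) + Φ'' t + Ψ'' t ⬝ᵥ x = 0 := by
    intro t ht
    have h1 := hθeq t ht
    have h2 : (∫ s in (0:ℝ)..t, θ s * κv (t - s)) = (-(1/c)) * w t := by
      calc (∫ s in (0:ℝ)..t, θ s * κv (t - s))
          = ∫ s in (0:ℝ)..t, (-(1/c)) * (θ s * K2 (t - s)) := by
            apply intervalIntegral.integral_congr
            intro s _
            show θ s * κv (t - s) = (-(1/c)) * (θ s * K2 (t - s))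
            simp only [hκvdef]
            ring
        _ = (-(1/c)) * w t := by rw [intervalIntegral.integral_const_mul, hwdef]
    rw [h2] at h1
    simp only [havdef] at h1
    rw [hBe t ht] at h1
    field_simp at h1
    linarith
  -- the function E is constant
  have hmain : ∀ τ, 0 ≤ τ → h τ = ℓ - (c * Θp τ + Wp τ) - Φ' τ - Ψ' τ ⬝ᵥ x := by
    intro τ hτ
    have hEc : ContinuousOn (fun t => h t + (c * Θp t + Wp t) + Φ' t + Ψ' t ⬝ᵥ x)
        (Icc 0 τ) :=
      (((hhc.mono Icc_subset_Ici_self).add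
        ((continuous_const.mul hΘc).add hWc).continuousOn).add
        (hΦ'c.mono Icc_subset_Ici_self)).add ((hdotc' x).mono Icc_subset_Ici_self)
    have hEd : ∀ t ∈ Ico (0:ℝ) τ,
        HasDerivWithinAt (fun t => h t + (c * Θp t + Wp t) + Φ' t + Ψ' t ⬝ᵥ x) 0 (Ici t) t := by
      intro t ht
      have hsub : Ici t ⊆ Ici (0:ℝ) := Ici_subset_Ici.2 ht.1
      have D : HasDerivWithinAt (fun t => h t + (c * Θp t + Wp t) + Φ' t + Ψ' t ⬝ᵥ x)
          (h' t + (c * θ t + w t) + Φ'' t + Ψ'' t ⬝ᵥ x) (Ici t) t := by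
        refine HasDerivWithinAt.add (HasDerivWithinAt.add (HasDerivWithinAt.add ?_ ?_) ?_) ?_
        · exact (hh' t ht.1).mono hsub
        · exact (((prim_hasDerivAt' hθc t).const_mul c).add
            (prim_hasDerivAt' hwc t)).hasDerivWithinAt
        · exact (hΦ'' t ht.1).mono hsub
        · exact (hdot x t ht.1).mono hsub
      have h0 := hode t ht.1
      rw [h0] at D
      exact D
    have hconst := constant_of_has_deriv_right_zero hEc hEd τ ⟨hτ, le_refl τ⟩
    have hΘ0 : Θp 0 = 0 := intervalIntegral.integral_same
    have hW0 : Wp 0 = 0 := intervalIntegral.integral_same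
    have hx0 : Ψ' 0 ⬝ᵥ x = -(l ⬝ᵥ x) := by rw [hΨ'0, neg_dotProduct]
    rw [hΘ0, hW0, hΦ'0, hh0, hx0] at hconst
    simp only [mul_zero, add_zero, zero_add] at hconst
    linarith
  have hExist : ∀ τ ∈ Ici (0:ℝ),
      h τ = ℓ - (∫ s in (0:ℝ)..τ, θ s * (Ψ' (τ - s) ⬝ᵥ e₁)) - Φ' τ - Ψ' τ ⬝ᵥ x := by
    intro τ hτ
    have hτ' : (0:ℝ) ≤ τ := hτ
    rw [key θ hθc τ hτ']
    have := hmain τ hτ'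
    simp only [hΘdef, hWdef, hwdef] at this
    exact this
  refine ⟨θ, hθc.continuousOn, hExist, ?_⟩
  -- uniqueness
  intro θ' hθ'c hθ'eq t ht
  have ht' : (0:ℝ) ≤ t := ht
  set θt : ℝ → ℝ := fun s => θ' (max s 0) with hθtdef
  have hθtc : Continuous θt := hθ'c.comp_continuous htr htrm
  have hθte : ∀ s, 0 ≤ s → θt s = θ' s := by
    intro s hs; simp only [hθtdef]; rw [htre s hs]
  set g : ℝ → ℝ := fun s => θ s - θt s with hgdef
  have hgc : Continuous g := hθc.sub hθtc
  have hk1cont : ∀ τ : ℝ, 0 ≤ τ →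
      ContinuousOn (fun s => Ψ' (τ - s) ⬝ᵥ e₁) (uIcc (0:ℝ) τ) := by
    intro τ hτ
    rw [uIcc_of_le hτ]
    exact (hdotc' e₁).comp ((continuous_const.sub continuous_id).continuousOn)
      (fun s hs => mem_Ici.2 (by simp at hs ⊢; linarith [hs.2]))
  have hsub0 : ∀ τ, 0 ≤ τ → (∫ s in (0:ℝ)..τ, g s * (Ψ' (τ - s) ⬝ᵥ e₁)) = 0 := by
    intro τ hτ
    have e1 := hExist τ hτ
    have e2 := hθ'eq τ hτ
    have hcongr : (∫ s in (0:ℝ)..τ, θt s * (Ψ' (τ - s) ⬝ᵥ e₁))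
        = ∫ s in (0:ℝ)..τ, θ' s * (Ψ' (τ - s) ⬝ᵥ e₁) := by
      apply intervalIntegral.integral_congr
      intro s hs
      rw [uIcc_of_le hτ] at hs
      show θt s * (Ψ' (τ - s) ⬝ᵥ e₁) = θ' s * (Ψ' (τ - s) ⬝ᵥ e₁)
      rw [hθte s hs.1]
    have hIθ : IntervalIntegrable (fun s => θ s * (Ψ' (τ - s) ⬝ᵥ e₁))
        MeasureTheory.volume 0 τ :=
      ((hθc.continuousOn).mul (hk1cont τ hτ)).intervalIntegrable
    have hIθt : IntervalIntegrable (fun s => θt s * (Ψ' (τ - s) ⬝ᵥ e₁))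
        MeasureTheory.volume 0 τ :=
      ((hθtc.continuousOn).mul (hk1cont τ hτ)).intervalIntegrable
    have hsplit : (∫ s in (0:ℝ)..τ, g s * (Ψ' (τ - s) ⬝ᵥ e₁))
        = (∫ s in (0:ℝ)..τ, θ s * (Ψ' (τ - s) ⬝ᵥ e₁))
          - ∫ s in (0:ℝ)..τ, θt s * (Ψ' (τ - s) ⬝ᵥ e₁) := by
      rw [← intervalIntegral.integral_sub hIθ hIθt]
      apply intervalIntegral.integral_congr
      intro s _
      show g s * (Ψ' (τ - s) ⬝ᵥ e₁) = θ s * (Ψ' (τ - s) ⬝ᵥ e₁) - θt s * (Ψ' (τ - s) ⬝ᵥ e₁)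
      simp only [hgdef]
      ring
    rw [hsplit]
    linarith
  set wg : ℝ → ℝ := fun u => ∫ s in (0:ℝ)..u, g s * K2 (u - s) with hwgdef
  have hwgc : Continuous wg := cont_conv' hgc hK2
  have hgode : ∀ τ, 0 ≤ τ → c * g τ + wg τ = 0 := by
    intro τ hτ
    have hD : HasDerivWithinAt
        (fun t => c * (∫ s in (0:ℝ)..t, g s) + ∫ s in (0:ℝ)..t, wg s)
        (c * g τ + wg τ) (Ici 0) τ :=
      (((prim_hasDerivAt' hgc τ).const_mul c).add
        (prim_hasDerivAt' hwgc τ)).hasDerivWithinAt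
    have hzfun : ∀ y ∈ Ici (0:ℝ),
        (fun t => c * (∫ s in (0:ℝ)..t, g s) + ∫ s in (0:ℝ)..t, wg s) y
          = (fun _ : ℝ => (0:ℝ)) y := by
      intro y hy
      have hy' : (0:ℝ) ≤ y := hy
      have hk := key g hgc y hy'
      have hs0 := hsub0 y hy'
      show c * (∫ s in (0:ℝ)..y, g s) + (∫ s in (0:ℝ)..y, wg s) = 0
      simp only [hwgdef]
      linarith [hk, hs0]
    have hconstD : HasDerivWithinAt
        (fun t => c * (∫ s in (0:ℝ)..t, g s) + ∫ s in (0:ℝ)..t, wg s) 0 (Ici 0) τ := by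
      have hz : HasDerivWithinAt (fun _ : ℝ => (0:ℝ)) 0 (Ici 0) τ :=
        (hasDerivAt_const τ (0:ℝ)).hasDerivWithinAt
      exact hz.congr hzfun (hzfun τ hτ)
    have hud : UniqueDiffWithinAt ℝ (Ici (0:ℝ)) τ := uniqueDiffOn_Ici 0 τ hτ
    have hd1 := hD.derivWithin hud
    have hd2 := hconstD.derivWithin hud
    rw [← hd1, hd2]
  -- Gronwall on [0, t]
  obtain ⟨Kb, hKb⟩ := isCompact_Icc.exists_bound_of_continuousOn
    (s := Icc (0:ℝ) t) hK2.continuousOn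
  have habs : ∀ τ ∈ Icc (0:ℝ) t, |g τ| ≤ (Kb / |c|) * ∫ s in (0:ℝ)..τ, |g s| := by
    intro τ hτ
    have h1 : g τ = -(wg τ) / c := by
      have := hgode τ hτ.1
      field_simp
      linarith
    have h2 : |wg τ| ≤ Kb * ∫ s in (0:ℝ)..τ, |g s| := by
      have habsi : |wg τ| ≤ ∫ s in (0:ℝ)..τ, |g s * K2 (τ - s)| := by
        simp only [hwgdef]
        exact intervalIntegral.abs_integral_le_integral_abs hτ.1
      refine le_trans habsi ?_
      rw [← intervalIntegral.integral_const_mul]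
      apply intervalIntegral.integral_mono_on hτ.1
      · exact ((hgc.mul (hK2.comp (continuous_const.sub continuous_id))).abs).intervalIntegrable _ _
      · exact (continuous_const.mul hgc.abs).intervalIntegrable _ _
      · intro s hs
        rw [abs_mul, mul_comm]
        apply mul_le_mul_of_nonneg_right ?_ (abs_nonneg _)
        have := hKb (τ - s) ⟨by linarith [hs.2], by linarith [hs.1, hτ.2]⟩
        rwa [Real.norm_eq_abs] at this
    calc |g τ| = |wg τ| / |c| := by rw [h1, abs_div, abs_neg]
      _ ≤ (Kb * ∫ s in (0:ℝ)..τ, |g s|) / |c| :=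
          (div_le_div_iff_of_pos_right (abs_pos.2 hc0)).2 h2
      _ = (Kb / |c|) * ∫ s in (0:ℝ)..τ, |g s| := by ring
  have hgz := gronwall_zero' hgc (Kb / |c|) t habs t ⟨ht', le_refl t⟩
  have : θ t - θt t = 0 := hgz
  have h2 := hθte t ht'
  show θ t = θ' t
  rw [← h2]
  linarith
end

section
/- Let a ≥ 0, β < 0, and let h : ℝ₊ → ℝ be continuously differentiable. Define θ(τ) = h'(τ) − β·h(τ) − (a/(2β))·(1 − e^{2βτ}). Then θ is continuous and for every τ ≥ 0, ∫₀^τ θ(s)·e^{β(τ−s)} ds − (a/(2β²))·(1 − e^{βτ})² + e^{βτ}·h(0) = h(τ). Moreover, θ is the unique continuous function with this property; i.e., θ is the calibrated Hull–White extension C(h) of the Vasiček model with parameters (a, β) to the initial forward rate curve h. -/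
open Set

/-- Closed-form calibration operator of the Vasiček model.
For a ≥ 0, β < 0 and a C¹ forward curve h, the function
θ(τ) = h'(τ) − βh(τ) − (a/(2β))(1 − e^{2βτ}) is continuous and is the unique continuous
solution of H(θ, h(0)) = h, where
H(θ, x)(τ) = ∫₀^τ θ(s)e^{β(τ−s)} ds − (a/(2β²))(1 − e^{βτ})² + e^{βτ}x. -/
theorem stmt_7 (a β : ℝ) (ha : 0 ≤ a) (hβ : β < 0)
    (h h' : ℝ → ℝ)
    (hdh : ∀ τ ∈ Ici (0 : ℝ), HasDerivWithinAt h (h' τ) (Ici 0) τ)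
    (hh'c : ContinuousOn h' (Ici 0))
    (θ : ℝ → ℝ)
    (hθ : ∀ τ, θ τ = h' τ - β * h τ - (a / (2 * β)) * (1 - Real.exp (2 * β * τ))) :
    ContinuousOn θ (Ici 0) ∧
    (∀ τ ∈ Ici (0 : ℝ),
      (∫ s in (0 : ℝ)..τ, θ s * Real.exp (β * (τ - s)))
        - (a / (2 * β ^ 2)) * (1 - Real.exp (β * τ)) ^ 2
        + Real.exp (β * τ) * h 0 = h τ) ∧
    ∀ θ' : ℝ → ℝ, ContinuousOn θ' (Ici 0) →
      (∀ τ ∈ Ici (0 : ℝ),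
        (∫ s in (0 : ℝ)..τ, θ' s * Real.exp (β * (τ - s)))
          - (a / (2 * β ^ 2)) * (1 - Real.exp (β * τ)) ^ 2
          + Real.exp (β * τ) * h 0 = h τ) →
      EqOn θ' θ (Ici 0) := by
  have hβ0 : β ≠ 0 := ne_of_lt hβ
  have hhc : ContinuousOn h (Ici 0) := fun τ hτ => (hdh τ hτ).continuousWithinAt
  have hθfun : θ = fun τ => h' τ - β * h τ - (a / (2 * β)) * (1 - Real.exp (2 * β * τ)) :=
    funext hθ
  have hθc : ContinuousOn θ (Ici 0) := by
    rw [hθfun]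
    exact (hh'c.sub (continuousOn_const.mul hhc)).sub
      (continuousOn_const.mul ((continuous_const.sub
        (Real.continuous_exp.comp (continuous_const.mul continuous_id))).continuousOn))
  -- derivative of exponentials
  have hexp : ∀ (k s : ℝ), HasDerivAt (fun u => Real.exp (k * u)) (k * Real.exp (k * s)) s := by
    intro k s
    have h1 : HasDerivAt (fun u : ℝ => k * u) (k * 1) s := (hasDerivAt_id s).const_mul k
    exact ((Real.hasDerivAt_exp (k * s)).comp s h1).congr_deriv (by ring)
  have hexpneg : ∀ s : ℝ, HasDerivAt (fun u => Real.exp (-(β * u)))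
      ((-β) * Real.exp (-(β * s))) s := by
    intro s; simpa [neg_mul] using hexp (-β) s
  set c : ℝ := a / (2 * β ^ 2) with hc
  set G : ℝ → ℝ := fun u => h u * Real.exp (-(β * u))
      + c * (Real.exp (-(β * u)) + Real.exp (β * u)) with hGdef
  -- derivative of G
  have hG : ∀ s ∈ Ici (0 : ℝ), HasDerivWithinAt G (θ s * Real.exp (-(β * s))) (Ici 0) s := by
    intro s hs
    have d1 : HasDerivWithinAt (fun u => h u * Real.exp (-(β * u)))
        (h' s * Real.exp (-(β * s)) + h s * ((-β) * Real.exp (-(β * s)))) (Ici 0) s :=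
      (hdh s hs).mul (hexpneg s).hasDerivWithinAt
    have d2 : HasDerivWithinAt (fun u => c * (Real.exp (-(β * u)) + Real.exp (β * u)))
        (c * ((-β) * Real.exp (-(β * s)) + β * Real.exp (β * s))) (Ici 0) s :=
      (((hexpneg s).hasDerivWithinAt).add ((hexp β s).hasDerivWithinAt)).const_mul c
    have := d1.add d2
    refine this.congr_deriv (Eq.symm ?_)
    have hC : Real.exp (2 * β * s) = Real.exp (β * s) * Real.exp (β * s) := by
      rw [← Real.exp_add]; ring_nf
    have hA : Real.exp (-(β * s)) = (Real.exp (β * s))⁻¹ := by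
      rw [← Real.exp_neg]
    rw [hθ, hc, hC, hA]
    field_simp
    ring
  have hfint : ∀ (g : ℝ → ℝ), ContinuousOn g (Ici 0) → ∀ τ : ℝ, 0 ≤ τ →
      IntervalIntegrable (fun s => g s * Real.exp (-(β * s))) MeasureTheory.volume 0 τ := by
    intro g hg τ hτ
    apply ContinuousOn.intervalIntegrable
    apply ContinuousOn.mul
    · exact hg.mono (by rw [uIcc_of_le hτ]; exact Icc_subset_Ici_self)
    · exact (Real.continuous_exp.comp (continuous_const.mul continuous_id).neg).continuousOn
  -- core FTC identity
  have core : ∀ τ ∈ Ici (0 : ℝ),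
      (∫ s in (0 : ℝ)..τ, θ s * Real.exp (-(β * s))) = G τ - G 0 := by
    intro τ hτ
    apply intervalIntegral.integral_eq_sub_of_hasDeriv_right_of_le hτ
    · exact fun x hx => ((hG x (Icc_subset_Ici_self hx)).continuousWithinAt).mono
        (Icc_subset_Ici_self)
    · intro x hx
      exact (((hG x (le_of_lt hx.1)).hasDerivAt (Ici_mem_nhds hx.1)).hasDerivWithinAt)
    · exact hfint θ hθc τ hτ
  -- rewrite the H-integral
  have hrw : ∀ (g : ℝ → ℝ) (t : ℝ),
      (∫ s in (0 : ℝ)..t, g s * Real.exp (β * (t - s)))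
        = Real.exp (β * t) * ∫ s in (0 : ℝ)..t, g s * Real.exp (-(β * s)) := by
    intro g t
    rw [← intervalIntegral.integral_const_mul]
    apply intervalIntegral.integral_congr
    intro s _
    show g s * Real.exp (β * (t - s)) = Real.exp (β * t) * (g s * Real.exp (-(β * s)))
    rw [show β * (t - s) = β * t + -(β * s) by ring, Real.exp_add]
    ring
  -- existence
  have hex : ∀ τ ∈ Ici (0 : ℝ),
      (∫ s in (0 : ℝ)..τ, θ s * Real.exp (β * (τ - s)))
        - c * (1 - Real.exp (β * τ)) ^ 2 + Real.exp (β * τ) * h 0 = h τ := by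
    intro τ hτ
    rw [hrw, core τ hτ]
    have hEE : Real.exp (β * τ) * Real.exp (-(β * τ)) = 1 := by
      rw [← Real.exp_add]; simp
    simp only [hGdef, mul_zero, neg_zero, Real.exp_zero]
    linear_combination (h τ + c) * hEE
  refine ⟨hθc, hex, ?_⟩
  -- uniqueness
  intro θ' hθ'c hprop τ hτ
  have hsame : ∀ t ∈ Ici (0 : ℝ),
      (∫ s in (0 : ℝ)..t, θ' s * Real.exp (-(β * s)))
        = ∫ s in (0 : ℝ)..t, θ s * Real.exp (-(β * s)) := by
    intro t ht
    have h1 := hprop t ht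
    have h2 := hex t ht
    rw [hrw] at h1 h2
    have := h1.trans h2.symm
    have h3 : Real.exp (β * t) * (∫ s in (0 : ℝ)..t, θ' s * Real.exp (-(β * s)))
        = Real.exp (β * t) * ∫ s in (0 : ℝ)..t, θ s * Real.exp (-(β * s)) := by linarith
    exact mul_left_cancel₀ (Real.exp_ne_zero _) h3
  have hsub : Ioi τ ⊆ Ici (0 : ℝ) := fun x hx => show (0:ℝ) ≤ x from le_trans (mem_Ici.mp hτ) (le_of_lt (mem_Ioi.mp hx))
  have hderiv : ∀ (g : ℝ → ℝ), ContinuousOn g (Ici 0) →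
      HasDerivWithinAt (fun t => ∫ s in (0 : ℝ)..t, g s * Real.exp (-(β * s)))
        (g τ * Real.exp (-(β * τ))) (Ici τ) τ := by
    intro g hg
    have hgc : ContinuousOn (fun s => g s * Real.exp (-(β * s))) (Ici 0) :=
      hg.mul (Real.continuous_exp.comp (continuous_const.mul continuous_id).neg).continuousOn
    exact intervalIntegral.integral_hasDerivWithinAt_right (hfint g hg τ hτ)
      ((hgc.mono hsub).stronglyMeasurableAtFilter_nhdsWithin measurableSet_Ioi τ)
      ((hgc τ hτ).mono hsub)
  have hF' := hderiv θ' hθ'c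
  have hFθ' := hderiv θ hθc
  have hEqOn : ∀ t ∈ Ici τ, (fun t => ∫ s in (0 : ℝ)..t, θ s * Real.exp (-(β * s))) t
      = (fun t => ∫ s in (0 : ℝ)..t, θ' s * Real.exp (-(β * s))) t :=
    fun t ht => (hsame t (mem_Ici.mpr (le_trans (mem_Ici.mp hτ) (mem_Ici.mp ht)))).symm
  have hF2 : HasDerivWithinAt (fun t => ∫ s in (0 : ℝ)..t, θ s * Real.exp (-(β * s)))
      (θ' τ * Real.exp (-(β * τ))) (Ici τ) τ :=
    hF'.congr hEqOn (hEqOn τ self_mem_Ici)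
  have hud : UniqueDiffWithinAt ℝ (Ici τ) τ := uniqueDiffOn_Ici τ τ self_mem_Ici
  have heq : θ' τ * Real.exp (-(β * τ)) = θ τ * Real.exp (-(β * τ)) :=
    (hF2.derivWithin hud).symm.trans (hFθ'.derivWithin hud)
  exact mul_right_cancel₀ (Real.exp_ne_zero _) heq
end

section
/- Let d ≥ 1, ℓ ∈ ℝ, x, x' ∈ ℝ^d, δ ≥ 0, let Φ : ℝ₊ → ℝ and Ψ : ℝ₊ → ℝ^d be continuously differentiable, and let θ : ℝ₊ → ℝ be continuous. Define H(θ, x)(τ) = ℓ − ∫₀^τ θ(s)⟨Ψ'(τ−s), e₁⟩ ds − Φ'(τ) − ⟨Ψ'(τ), x⟩. Then for every τ ≥ 0: H(θ(δ+·), x')(τ) = H(θ, x)(δ+τ) + Φ'(δ+τ) − Φ'(τ) + ⟨Ψ'(δ+τ), x⟩ − ⟨Ψ'(τ), x'⟩ + ∫₀^δ θ(s)⟨Ψ'(δ+τ−s), e₁⟩ ds. (This is the efficient update formula for forward rate curves in consistent recalibration models: it expresses the new curve via integrals over an interval of length δ only.) -/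
open Matrix Set

/-- Efficient updating of forward rate curves in CRC models.
For the forward-curve operator H(θ, x)(τ) = ℓ − ∫₀^τ θ(s)⟨Ψ'(τ−s), e₁⟩ ds − Φ'(τ) − ⟨Ψ'(τ), x⟩,
one has, for every τ ≥ 0,
H(θ(δ+·), x')(τ) = H(θ, x)(δ+τ) + Φ'(δ+τ) − Φ'(τ) + ⟨Ψ'(δ+τ), x⟩ − ⟨Ψ'(τ), x'⟩
                   + ∫₀^δ θ(s)⟨Ψ'(δ+τ−s), e₁⟩ ds. -/
theorem stmt_8 (d : ℕ) (hd : 1 ≤ d) (ℓ : ℝ)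
    (e₁ : Fin d → ℝ) (he₁ : e₁ = fun j : Fin d => if (j : ℕ) = 0 then (1 : ℝ) else 0)
    (x x' : Fin d → ℝ) (δ : ℝ) (hδ : 0 ≤ δ)
    (Φ Φ' : ℝ → ℝ) (Ψ Ψ' : ℝ → Fin d → ℝ)
    (hΦ' : ∀ τ ∈ Ici (0 : ℝ), HasDerivWithinAt Φ (Φ' τ) (Ici 0) τ)
    (hΦ'c : ContinuousOn Φ' (Ici 0))
    (hΨ' : ∀ τ ∈ Ici (0 : ℝ), HasDerivWithinAt Ψ (Ψ' τ) (Ici 0) τ)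
    (hΨ'c : ContinuousOn Ψ' (Ici 0))
    (θ : ℝ → ℝ) (hθ : ContinuousOn θ (Ici 0))
    (H : (ℝ → ℝ) → (Fin d → ℝ) → ℝ → ℝ)
    (hH : ∀ (ϑ : ℝ → ℝ) (z : Fin d → ℝ) (τ : ℝ),
      H ϑ z τ = ℓ - (∫ s in (0 : ℝ)..τ, ϑ s * (Ψ' (τ - s) ⬝ᵥ e₁)) - Φ' τ - Ψ' τ ⬝ᵥ z) :
    ∀ τ ∈ Ici (0 : ℝ),
      H (fun s => θ (δ + s)) x' τ
        = H θ x (δ + τ) + Φ' (δ + τ) - Φ' τ + Ψ' (δ + τ) ⬝ᵥ x - Ψ' τ ⬝ᵥ x'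
          + ∫ s in (0 : ℝ)..δ, θ s * (Ψ' (δ + τ - s) ⬝ᵥ e₁) := by
  intro τ hτ
  have hτ0 : (0:ℝ) ≤ τ := hτ
  set g : ℝ → ℝ := fun s => θ s * (Ψ' (δ + τ - s) ⬝ᵥ e₁) with hg
  have hcont : ContinuousOn g (uIcc 0 (δ + τ)) := by
    rw [uIcc_of_le (by linarith)]
    apply ContinuousOn.mul
    · exact hθ.mono fun y hy => hy.1
    · have hmap : MapsTo (fun s : ℝ => δ + τ - s) (Icc 0 (δ + τ)) (Ici 0) := by
        intro y hy
        simp only [mem_Ici]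
        linarith [hy.2]
      have h1 : ContinuousOn (fun s : ℝ => Ψ' (δ + τ - s)) (Icc 0 (δ + τ)) :=
        hΨ'c.comp (by fun_prop) hmap
      unfold dotProduct
      exact continuousOn_finset_sum _ fun i _ => (((continuous_apply i).comp_continuousOn h1).mul continuousOn_const)
  have hint : IntervalIntegrable g MeasureTheory.volume 0 (δ + τ) :=
    hcont.intervalIntegrable
  have h1 : IntervalIntegrable g MeasureTheory.volume 0 δ :=
    hint.mono_set (by rw [uIcc_of_le hδ, uIcc_of_le (by linarith)]; exact Icc_subset_Icc le_rfl (by linarith))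
  have h2 : IntervalIntegrable g MeasureTheory.volume δ (δ + τ) :=
    hint.mono_set (by rw [uIcc_of_le (by linarith), uIcc_of_le (by linarith)]; exact Icc_subset_Icc hδ le_rfl)
  have hsplit : (∫ s in (0:ℝ)..(δ + τ), g s)
      = (∫ s in (0:ℝ)..δ, g s) + ∫ s in δ..(δ + τ), g s :=
    (intervalIntegral.integral_add_adjacent_intervals h1 h2).symm
  have hshift : (∫ s in (0:ℝ)..τ, θ (δ + s) * (Ψ' (τ - s) ⬝ᵥ e₁))
      = ∫ s in δ..(δ + τ), g s := by
    have := intervalIntegral.integral_comp_add_left (a := (0:ℝ)) (b := τ) g δ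
    rw [add_zero] at this
    rw [← this]
    apply intervalIntegral.integral_congr
    intro s _
    simp only [hg]
    ring_nf
  rw [hH, hH, hsplit, hshift]
  ring
end

section
/- Let Φ : ℝ₊ → ℝ and Ψ : ℝ₊ → ℝ^d be twice continuously differentiable and satisfy the Riccati equations Φ' = F∘Ψ, Φ(0) = 0 and Ψ' = R∘Ψ − λ, Ψ(0) = 0, and assume ⟨λ, e₁⟩ ≠ 0. Let ℓ ∈ ℝ, x ∈ ℝ^d, let θ : ℝ₊ → ℝ be continuous, and define h(τ) = ℓ − ∫₀^τ θ(s)⟨Ψ'(τ−s), e₁⟩ ds − Φ'(τ) − ⟨Ψ'(τ), x⟩. Then h is differentiable at 0 and θ(0) = (1/⟨λ, e₁⟩)·(h'(0) − ⟨λ, b⟩ − Σ_{i=1}^d ⟨λ, βⁱ⟩·xⁱ), i.e. θ(0) = (1/⟨λ, e₁⟩)(h'(0) − F'(0)·λ − ⟨R'(0)·λ, x⟩). -/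
open Matrix Set


lemma myDot {d : ℕ} {f : ℝ → Fin d → ℝ} {f' v : Fin d → ℝ} {s : Set ℝ} {x : ℝ}
    (hf : HasDerivWithinAt f f' s x) :
    HasDerivWithinAt (fun t => f t ⬝ᵥ v) (f' ⬝ᵥ v) s x := by
  simp only [dotProduct]
  exact HasDerivWithinAt.fun_sum fun i _ => ((hasDerivWithinAt_pi.1 hf i).mul_const (v i))

lemma myQuad {d : ℕ} {f : ℝ → Fin d → ℝ} {f' : Fin d → ℝ} {M : Matrix (Fin d) (Fin d) ℝ}
    {s : Set ℝ} {x : ℝ} (hf : HasDerivWithinAt f f' s x) (h0 : f x = 0) :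
    HasDerivWithinAt (fun t => f t ⬝ᵥ M.mulVec (f t)) 0 s x := by
  have H : HasDerivWithinAt (fun t => f t ⬝ᵥ M.mulVec (f t))
      (∑ i, (f' i * (∑ j, M i j * f x j) + f x i * (∑ j, M i j * f' j))) s x := by
    simp only [dotProduct, Matrix.mulVec]
    exact HasDerivWithinAt.fun_sum fun i _ =>
      (hasDerivWithinAt_pi.1 hf i).fun_mul
        (HasDerivWithinAt.fun_sum fun j _ => ((hasDerivWithinAt_pi.1 hf j).const_mul (M i j)))
  simpa [h0] using H

lemma myConv {θ q : ℝ → ℝ} (hθ : ContinuousOn θ (Ici 0)) (hq : ContinuousOn q (Ici 0)) :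
    HasDerivWithinAt (fun τ => ∫ s in (0:ℝ)..τ, θ s * q (τ - s)) (θ 0 * q 0) (Ici 0) 0 := by
  rw [hasDerivWithinAt_iff_isLittleO, Asymptotics.isLittleO_iff]
  intro ε hε
  set c := θ 0 * q 0 with hc
  have hden : (0:ℝ) < |θ 0| + |q 0| + 2 := by positivity
  set ε' := min 1 (ε / (|θ 0| + |q 0| + 2)) with hε'def
  have hε' : 0 < ε' := lt_min one_pos (div_pos hε hden)
  obtain ⟨δ₁, hδ₁, hθδ⟩ := Metric.continuousWithinAt_iff.mp (hθ 0 self_mem_Ici) ε' hε'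
  obtain ⟨δ₂, hδ₂, hqδ⟩ := Metric.continuousWithinAt_iff.mp (hq 0 self_mem_Ici) ε' hε'
  have hδ : 0 < min δ₁ δ₂ := lt_min hδ₁ hδ₂
  filter_upwards [Ico_mem_nhdsGE hδ] with τ hτ
  obtain ⟨hτ0, hτδ⟩ := hτ
  rcases eq_or_lt_of_le hτ0 with rfl | hτpos
  · simp
  have hbound : ∀ s ∈ Set.uIoc (0:ℝ) τ, ‖θ s * q (τ - s) - c‖ ≤ ε := by
    intro s hs
    rw [Set.uIoc_of_le hτ0] at hs
    obtain ⟨hs0, hsτ⟩ := hs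
    have h1 : |θ s - θ 0| < ε' := by
      have := hθδ (mem_Ici.2 hs0.le) (by simp [abs_of_nonneg hs0.le]; exact lt_of_le_of_lt hsτ (lt_of_lt_of_le hτδ (min_le_left _ _)))
      simpa [Real.dist_eq] using this
    have h2 : |q (τ - s) - q 0| < ε' := by
      have hts : (0:ℝ) ≤ τ - s := by linarith
      have := hqδ (mem_Ici.2 hts) (by
        simp [Real.dist_eq, abs_of_nonneg hts]
        have : τ - s < min δ₁ δ₂ := by linarith
        exact lt_of_lt_of_le this (min_le_right _ _))
      simpa [Real.dist_eq] using this
    have hθs : |θ s| ≤ |θ 0| + ε' := by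
      have := abs_sub_abs_le_abs_sub (θ s) (θ 0); linarith
    have key : |θ s * q (τ - s) - c| ≤ |θ s| * |q (τ - s) - q 0| + |θ s - θ 0| * |q 0| := by
      have : θ s * q (τ - s) - c = θ s * (q (τ - s) - q 0) + (θ s - θ 0) * q 0 := by
        rw [hc]; ring
      rw [this]
      calc |θ s * (q (τ - s) - q 0) + (θ s - θ 0) * q 0|
          ≤ |θ s * (q (τ - s) - q 0)| + |(θ s - θ 0) * q 0| := abs_add_le _ _
        _ = |θ s| * |q (τ - s) - q 0| + |θ s - θ 0| * |q 0| := by rw [abs_mul, abs_mul]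
    have hε'le : ε' ≤ ε / (|θ 0| + |q 0| + 2) := min_le_right _ _
    have hε'1 : ε' ≤ 1 := min_le_left _ _
    have : |θ s| * |q (τ - s) - q 0| + |θ s - θ 0| * |q 0| ≤ (|θ 0| + 1) * ε' + ε' * |q 0| := by
      have ha := abs_nonneg (θ s)
      have hb := abs_nonneg (q 0)
      nlinarith [abs_nonneg (q (τ - s) - q 0), abs_nonneg (θ s - θ 0)]
    have hfin : (|θ 0| + 1) * ε' + ε' * |q 0| ≤ ε := by
      have : (|θ 0| + 1) * ε' + ε' * |q 0| = ε' * (|θ 0| + |q 0| + 1) := by ring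
      rw [this]
      have h3 : ε' * (|θ 0| + |q 0| + 1) ≤ (ε / (|θ 0| + |q 0| + 2)) * (|θ 0| + |q 0| + 2) := by
        apply mul_le_mul hε'le (by linarith) (by positivity) (by positivity)
      rw [div_mul_cancel₀] at h3
      · exact h3
      · exact ne_of_gt hden
    calc ‖θ s * q (τ - s) - c‖ = |θ s * q (τ - s) - c| := rfl
      _ ≤ _ := key
      _ ≤ (|θ 0| + 1) * ε' + ε' * |q 0| := this
      _ ≤ ε := hfin
  have hcont : ContinuousOn (fun s => θ s * q (τ - s)) (Icc 0 τ) := by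
    apply ContinuousOn.mul (hθ.mono Icc_subset_Ici_self)
    apply hq.comp (continuousOn_const.sub continuousOn_id)
    intro s hs
    simp only [mem_Ici, id_eq, Pi.sub_apply]
    linarith [hs.2]
  have hint : IntervalIntegrable (fun s => θ s * q (τ - s)) MeasureTheory.volume 0 τ := by
    apply hcont.intervalIntegrable_of_Icc hτ0
  have hsplit : (∫ s in (0:ℝ)..τ, θ s * q (τ - s)) - τ * c
      = ∫ s in (0:ℝ)..τ, (θ s * q (τ - s) - c) := by
    rw [intervalIntegral.integral_sub hint intervalIntegrable_const,
      intervalIntegral.integral_const]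
    simp [smul_eq_mul]
  have := intervalIntegral.norm_integral_le_of_norm_le_const hbound
  rw [← hsplit] at this
  simpa [Real.norm_eq_abs, abs_of_nonneg hτ0, smul_eq_mul] using this

/-- The short end of the Hull–White extension.
If (Φ, Ψ) solve the Riccati equations Φ' = F∘Ψ, Φ(0) = 0, Ψ' = R∘Ψ − λ, Ψ(0) = 0 with
⟨λ, e₁⟩ ≠ 0, and h(τ) = ℓ − ∫₀^τ θ(s)⟨Ψ'(τ−s), e₁⟩ ds − Φ'(τ) − ⟨Ψ'(τ), x⟩ for a continuous
θ, then h is differentiable at 0 and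
θ(0) = (1/⟨λ, e₁⟩)(h'(0) − ⟨λ, b⟩ − Σᵢ ⟨λ, βⁱ⟩ xⁱ) = (1/⟨λ, e₁⟩)(h'(0) − F'(0)·λ − ⟨R'(0)·λ, x⟩). -/
theorem stmt_10 (d : ℕ) (hd : 1 ≤ d) (ℓ : ℝ)
    (e₁ : Fin d → ℝ) (he₁ : e₁ = fun j : Fin d => if (j : ℕ) = 0 then (1 : ℝ) else 0)
    (a : Matrix (Fin d) (Fin d) ℝ) (α : Fin d → Matrix (Fin d) (Fin d) ℝ)
    (b l : Fin d → ℝ) (β : Fin d → Fin d → ℝ)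
    (ha : a.IsSymm) (hα : ∀ i, (α i).IsSymm)
    (hle₁ : l ⬝ᵥ e₁ ≠ 0)
    (F : (Fin d → ℝ) → ℝ) (R : (Fin d → ℝ) → Fin d → ℝ)
    (hF : ∀ u, F u = (1 / 2) * (u ⬝ᵥ a.mulVec u) + u ⬝ᵥ b)
    (hR : ∀ u i, R u i = (1 / 2) * (u ⬝ᵥ (α i).mulVec u) + u ⬝ᵥ β i)
    (Φ Φ' Φ'' : ℝ → ℝ) (Ψ Ψ' Ψ'' : ℝ → Fin d → ℝ)
    (hΦ' : ∀ τ ∈ Ici (0 : ℝ), HasDerivWithinAt Φ (Φ' τ) (Ici 0) τ)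
    (hΦ'' : ∀ τ ∈ Ici (0 : ℝ), HasDerivWithinAt Φ' (Φ'' τ) (Ici 0) τ)
    (hΦ''c : ContinuousOn Φ'' (Ici 0))
    (hΨ' : ∀ τ ∈ Ici (0 : ℝ), HasDerivWithinAt Ψ (Ψ' τ) (Ici 0) τ)
    (hΨ'' : ∀ τ ∈ Ici (0 : ℝ), HasDerivWithinAt Ψ' (Ψ'' τ) (Ici 0) τ)
    (hΨ''c : ContinuousOn Ψ'' (Ici 0))
    (hRic1 : ∀ τ ∈ Ici (0 : ℝ), Φ' τ = F (Ψ τ)) (hΦ0 : Φ 0 = 0)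
    (hRic2 : ∀ τ ∈ Ici (0 : ℝ), Ψ' τ = R (Ψ τ) - l) (hΨ0 : Ψ 0 = 0)
    (x : Fin d → ℝ) (θ : ℝ → ℝ) (hθ : ContinuousOn θ (Ici 0))
    (h : ℝ → ℝ)
    (hh : ∀ τ, h τ =
      ℓ - (∫ s in (0 : ℝ)..τ, θ s * (Ψ' (τ - s) ⬝ᵥ e₁)) - Φ' τ - Ψ' τ ⬝ᵥ x) :
    ∃ h'0 : ℝ, HasDerivWithinAt h h'0 (Ici 0) 0 ∧
      θ 0 = (1 / (l ⬝ᵥ e₁)) * (h'0 - l ⬝ᵥ b - ∑ i, (l ⬝ᵥ β i) * x i) := by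
  have hU : UniqueDiffWithinAt ℝ (Ici (0:ℝ)) 0 := uniqueDiffOn_Ici 0 0 self_mem_Ici
  have hΨ'0 : Ψ' 0 = -l := by
    rw [hRic2 0 self_mem_Ici, hΨ0]
    funext i
    simp [hR]
  -- continuity of Ψ'
  have hΨ'c : ContinuousOn Ψ' (Ici 0) := fun τ hτ => (hΨ'' τ hτ).continuousWithinAt
  have hqc : ContinuousOn (fun u => Ψ' u ⬝ᵥ e₁) (Ici 0) := by
    simp only [dotProduct]
    exact continuousOn_finset_sum _ fun i _ =>
      ((continuous_apply i).comp_continuousOn hΨ'c).mul continuousOn_const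
  -- derivative of the convolution term
  have hconv : HasDerivWithinAt (fun τ => ∫ s in (0:ℝ)..τ, θ s * (Ψ' (τ - s) ⬝ᵥ e₁))
      (θ 0 * (Ψ' 0 ⬝ᵥ e₁)) (Ici 0) 0 := myConv hθ hqc
  -- derivative of Ψ' ⬝ᵥ x
  have hdotx : HasDerivWithinAt (fun τ => Ψ' τ ⬝ᵥ x) (Ψ'' 0 ⬝ᵥ x) (Ici 0) 0 :=
    myDot (hΨ'' 0 self_mem_Ici)
  -- identify Φ'' 0
  have hΨd := hΨ' 0 self_mem_Ici
  have hFΨ : HasDerivWithinAt (fun τ => F (Ψ τ)) (Ψ' 0 ⬝ᵥ b) (Ici 0) 0 := by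
    have he : (fun τ => F (Ψ τ)) =
        fun τ => (1/2) * (Ψ τ ⬝ᵥ a.mulVec (Ψ τ)) + Ψ τ ⬝ᵥ b := funext fun τ => hF _
    rw [he]
    have H := ((myQuad (M := a) hΨd hΨ0).const_mul (1/2)).fun_add (myDot (v := b) hΨd)
    simpa using H
  have hΦ'alt : HasDerivWithinAt Φ' (Ψ' 0 ⬝ᵥ b) (Ici 0) 0 :=
    hFΨ.congr (fun τ hτ => hRic1 τ hτ) (hRic1 0 self_mem_Ici)
  have hΦ''0 : Φ'' 0 = Ψ' 0 ⬝ᵥ b := by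
    have e1 := (hΦ'' 0 self_mem_Ici).derivWithin hU
    have e2 := hΦ'alt.derivWithin hU
    rw [← e1, ← e2]
  -- identify Ψ'' 0
  have hΨ''0 : ∀ i, Ψ'' 0 i = Ψ' 0 ⬝ᵥ β i := by
    intro i
    have hRi : HasDerivWithinAt (fun τ => R (Ψ τ) i - l i) (Ψ' 0 ⬝ᵥ β i) (Ici 0) 0 := by
      have he : (fun τ => R (Ψ τ) i - l i) =
          fun τ => (1/2) * (Ψ τ ⬝ᵥ (α i).mulVec (Ψ τ)) + Ψ τ ⬝ᵥ β i - l i :=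
        funext fun τ => by rw [hR]
      rw [he]
      have H := (((myQuad (M := α i) hΨd hΨ0).const_mul (1/2)).fun_add (myDot (v := β i) hΨd)).sub_const (l i)
      simpa using H
    have hΨ'alt : HasDerivWithinAt (fun τ => Ψ' τ i) (Ψ' 0 ⬝ᵥ β i) (Ici 0) 0 :=
      hRi.congr (fun τ hτ => by rw [hRic2 τ hτ]; rfl) (by rw [hRic2 0 self_mem_Ici]; rfl)
    have e1 := (hasDerivWithinAt_pi.1 (hΨ'' 0 self_mem_Ici) i).derivWithin hU
    have e2 := hΨ'alt.derivWithin hU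
    rw [← e1, ← e2]
  -- assemble h
  refine ⟨-(θ 0 * (Ψ' 0 ⬝ᵥ e₁)) - Φ'' 0 - Ψ'' 0 ⬝ᵥ x, ?_, ?_⟩
  · have he : h = fun τ =>
        ℓ - (∫ s in (0 : ℝ)..τ, θ s * (Ψ' (τ - s) ⬝ᵥ e₁)) - Φ' τ - Ψ' τ ⬝ᵥ x :=
      funext hh
    rw [he]
    have := (((hasDerivWithinAt_const (0:ℝ) (Ici (0:ℝ)) ℓ).fun_sub hconv).fun_sub
      (hΦ'' 0 self_mem_Ici)).fun_sub hdotx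
    simpa [sub_eq_add_neg, neg_add] using this
  · have h1 : Ψ' 0 ⬝ᵥ e₁ = -(l ⬝ᵥ e₁) := by rw [hΨ'0, neg_dotProduct]
    have h2 : Φ'' 0 = -(l ⬝ᵥ b) := by rw [hΦ''0, hΨ'0, neg_dotProduct]
    have h3 : Ψ'' 0 ⬝ᵥ x = -∑ i, (l ⬝ᵥ β i) * x i := by
      have he : Ψ'' 0 = fun i => -(l ⬝ᵥ β i) :=
        funext fun i => by rw [hΨ''0 i, hΨ'0, neg_dotProduct]
      rw [he]
      simp only [dotProduct, neg_mul]
      exact Finset.sum_neg_distrib _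
    rw [h1, h2, h3]
    field_simp
    ring
end

section
/- Let β < 0, t ≥ 0, let g : ℝ₊ → ℝ be continuous, Y : [0,t] → ℝ continuous, and I ∈ ℝ. Define for each τ ≥ 0: u(τ) = g(t+τ) − ∫₀^t (Y(s)/β)·e^{β(τ+t−s)}·(1 − e^{β(τ+t−s)}) ds + e^{βτ}·I, and set r = u(0) and ξ = ∫₀^t Y(s)·e^{2β(t−s)} ds. Then for every τ ≥ 0, u(τ) = g(t+τ) + e^{βτ}·(r − g(t)) + (1/β)·(e^{2βτ} − e^{βτ})·ξ. (Pathwise, this shows that in the Vasiček CRC example the forward rate curve h(t,τ) is determined by the initial curve h(0,·), the short rate r(t) = h(t,0), and ξ(t) = ∫₀^t Y(s)e^{2β(t−s)} ds, giving a three-dimensional realisation.) -/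
open Set

/-- Finite-dimensional realisation of the Vasiček CRC example.
For β < 0, continuous g, Y and I ∈ ℝ, the curve
u(τ) = g(t+τ) − ∫₀^t (Y(s)/β)e^{β(τ+t−s)}(1 − e^{β(τ+t−s)}) ds + e^{βτ}I
satisfies u(τ) = g(t+τ) + e^{βτ}(r − g(t)) + (1/β)(e^{2βτ} − e^{βτ})ξ with r = u(0)
and ξ = ∫₀^t Y(s)e^{2β(t−s)} ds. -/
theorem stmt_13 (β t : ℝ) (hβ : β < 0) (ht : 0 ≤ t)
    (g : ℝ → ℝ) (hg : ContinuousOn g (Ici 0))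
    (Y : ℝ → ℝ) (hY : ContinuousOn Y (Icc 0 t))
    (I : ℝ) (u : ℝ → ℝ)
    (hu : ∀ τ, u τ = g (t + τ)
      - (∫ s in (0 : ℝ)..t,
          (Y s / β) * Real.exp (β * (τ + t - s)) * (1 - Real.exp (β * (τ + t - s))))
      + Real.exp (β * τ) * I)
    (r ξ : ℝ) (hr : r = u 0)
    (hξ : ξ = ∫ s in (0 : ℝ)..t, Y s * Real.exp (2 * β * (t - s))) :
    ∀ τ, 0 ≤ τ →
      u τ = g (t + τ) + Real.exp (β * τ) * (r - g t)
        + (1 / β) * (Real.exp (2 * β * τ) - Real.exp (β * τ)) * ξ := by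
  have hβne : β ≠ 0 := ne_of_lt hβ
  set F1 : ℝ → ℝ := fun s => Y s / β * Real.exp (β * (t - s)) with hF1
  set F2 : ℝ → ℝ := fun s => Y s / β * Real.exp (2 * β * (t - s)) with hF2
  have hIcc : uIcc (0:ℝ) t = Icc 0 t := uIcc_of_le ht
  have hint1 : IntervalIntegrable F1 MeasureTheory.volume 0 t := by
    apply ContinuousOn.intervalIntegrable
    rw [hIcc]
    exact (hY.div_const β).mul
      (Continuous.continuousOn (by continuity))
  have hint2 : IntervalIntegrable F2 MeasureTheory.volume 0 t := by
    apply ContinuousOn.intervalIntegrable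
    rw [hIcc]
    exact (hY.div_const β).mul
      (Continuous.continuousOn (by continuity))
  have key : ∀ τ : ℝ,
      (∫ s in (0:ℝ)..t,
          (Y s / β) * Real.exp (β * (τ + t - s)) * (1 - Real.exp (β * (τ + t - s))))
      = Real.exp (β * τ) * (∫ s in (0:ℝ)..t, F1 s)
        - Real.exp (2 * β * τ) * (∫ s in (0:ℝ)..t, F2 s) := by
    intro τ
    rw [← intervalIntegral.integral_const_mul, ← intervalIntegral.integral_const_mul,
      ← intervalIntegral.integral_sub (hint1.const_mul _) (hint2.const_mul _)]
    apply intervalIntegral.integral_congr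
    intro s _
    have h1 : β * (τ + t - s) = β * τ + β * (t - s) := by ring
    have h2 : 2 * β * (τ + t - s) = 2 * β * τ + 2 * β * (t - s) := by ring
    simp only [hF1, hF2]
    have e1 : Real.exp (β * (τ + t - s)) = Real.exp (β * τ) * Real.exp (β * (t - s)) := by
      rw [h1, Real.exp_add]
    have e2 : Real.exp (β * (τ + t - s)) * Real.exp (β * (τ + t - s))
        = Real.exp (2 * β * τ) * Real.exp (2 * β * (t - s)) := by
      rw [← Real.exp_add, ← Real.exp_add]; congr 1; ring
    calc Y s / β * Real.exp (β * (τ + t - s)) * (1 - Real.exp (β * (τ + t - s)))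
        = Y s / β * Real.exp (β * (τ + t - s))
          - Y s / β * (Real.exp (β * (τ + t - s)) * Real.exp (β * (τ + t - s))) := by ring
      _ = Real.exp (β * τ) * (Y s / β * Real.exp (β * (t - s)))
          - Real.exp (2 * β * τ) * (Y s / β * Real.exp (2 * β * (t - s))) := by
          rw [e2, e1]; ring
  set A := ∫ s in (0:ℝ)..t, F1 s with hA
  set B := ∫ s in (0:ℝ)..t, F2 s with hB
  have hξB : ξ = β * B := by
    rw [hξ, hB, ← intervalIntegral.integral_const_mul]
    apply intervalIntegral.integral_congr
    intro s _
    simp only [hF2]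
    field_simp
  have hu0 : r = g t - (A - B) + I := by
    rw [hr, hu 0, key 0]
    simp
  intro τ hτ
  rw [hu τ, key τ, hu0, hξB]
  field_simp
  ring
end
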